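/- The map α : k[[u,v]] → k((t))[[τ]] × k((s))[[τ]] defined by sending a formal power series Σ_{i,j≥0} a_{ij} u^i v^j to the pair ( Σ_{j≥0} ( Σ_{i≥0} a_{ij} t^{i−j} ) τ^j , Σ_{i≥0} ( Σ_{j≥0} a_{ij} s^{j−i} ) τ^i ) is a well-defined injective ring homomorphism (for each fixed j the inner sum Σ_i a_{ij} t^{i−j} is a Laurent series of order ≥ −j, and similarly for the second component). In particular α(u) = (t, s^{−1}τ), α(v) = (t^{−1}τ, s), and α(u·v) = (τ, τ). -/

import Mathlib

/-!
STATEMENT 0 (Lemma 5.3 of the paper).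

The map `α : k[[u,v]] → k((t))[[τ]] × k((s))[[τ]]` sending
`Σ a_{ij} u^i v^j ↦ (Σ_j (Σ_i a_{ij} t^{i-j}) τ^j , Σ_i (Σ_j a_{ij} s^{j-i}) τ^i)`
is a well-defined injective ring homomorphism, with `α(u) = (t, s⁻¹τ)`,
`α(v) = (t⁻¹τ, s)` and `α(u·v) = (τ, τ)`.

We formalize `k[[u,v]]` as `MvPowerSeries (Fin 2) k` (variable `0` is `u`, variable `1` is `v`),
`k((t))` as `LaurentSeries k` and `k((t))[[τ]]` as `PowerSeries (LaurentSeries k)`.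
The map is completely characterized by its effect on coefficients: the coefficient of
`t^m` in the `τ^j`-coefficient of the first component of `α a` is `a_{(m+j), j}`
(and `0` when `m + j < 0`), and symmetrically for the second component.
-/

noncomputable section Stmt0Aux

open Finsupp MvPowerSeries

variable {k : Type*} [CommRing k]

def E (u v : Fin 2) (n m : ℕ) : Fin 2 →₀ ℕ := Finsupp.single u m + Finsupp.single v n

lemma fin2_cases (u v x : Fin 2) (h : u ≠ v) : x = u ∨ x = v := by
  have h' : u.val ≠ v.val := fun hh => h (Fin.ext hh)
  have := u.isLt; have := v.isLt; have := x.isLt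
  by_cases hx : x = u
  · exact Or.inl hx
  · refine Or.inr (Fin.ext ?_)
    have hx' : x.val ≠ u.val := fun hh => hx (Fin.ext hh)
    omega

lemma decomp (u v : Fin 2) (h : u ≠ v) (g : Fin 2 →₀ ℕ) :
    E u v (g v) (g u) = g := by
  ext x
  rcases fin2_cases u v x h with rfl | rfl <;>
    simp [E, Finsupp.single_apply, h, h.symm, Ne.symm h]

lemma E_apply_u (u v : Fin 2) (h : u ≠ v) (n m : ℕ) : E u v n m u = m := by
  simp [E, Finsupp.single_apply, Ne.symm h, h]

lemma E_apply_v (u v : Fin 2) (h : u ≠ v) (n m : ℕ) : E u v n m v = n := by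
  simp [E, Finsupp.single_apply, Ne.symm h, h]

lemma E_inj (u v : Fin 2) (h : u ≠ v) {n m n' m' : ℕ} :
    E u v n m = E u v n' m' ↔ n = n' ∧ m = m' := by
  constructor
  · intro hE
    constructor
    · have := congrArg (fun g : Fin 2 →₀ ℕ => g v) hE
      simpa [E_apply_v u v h] using this
    · have := congrArg (fun g : Fin 2 →₀ ℕ => g u) hE
      simpa [E_apply_u u v h] using this
  · rintro ⟨rfl, rfl⟩; rfl

lemma E_eq_zero (u v : Fin 2) (h : u ≠ v) {n m : ℕ} :
    E u v n m = 0 ↔ n = 0 ∧ m = 0 := by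
  have h0 : (0 : Fin 2 →₀ ℕ) = E u v 0 0 := by simp [E]
  rw [h0, E_inj u v h]

lemma E_add (u v : Fin 2) (n m n' m' : ℕ) :
    E u v n m + E u v n' m' = E u v (n + n') (m + m') := by
  simp [E, Finsupp.single_add]; abel

lemma coeff_mul_E (u v : Fin 2) (h : u ≠ v) (n m : ℕ) (a b : MvPowerSeries (Fin 2) k) :
    MvPowerSeries.coeff (R := k) (E u v n m) (a * b)
      = ∑ p ∈ Finset.HasAntidiagonal.antidiagonal n, ∑ q ∈ Finset.HasAntidiagonal.antidiagonal m,
          MvPowerSeries.coeff (R := k) (E u v p.1 q.1) a * MvPowerSeries.coeff (R := k) (E u v p.2 q.2) b := by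
  rw [MvPowerSeries.coeff_mul, ← Finset.sum_product']
  refine Finset.sum_nbij' (i := fun p => ((p.1 v, p.2 v), (p.1 u, p.2 u)))
    (j := fun x => (E u v x.1.1 x.2.1, E u v x.1.2 x.2.2)) ?_ ?_ ?_ ?_ ?_
  · rintro ⟨p1, p2⟩ hp
    rw [Finset.HasAntidiagonal.mem_antidiagonal] at hp
    simp only [Finset.mem_product, Finset.HasAntidiagonal.mem_antidiagonal]
    constructor
    · have := congrArg (fun g : Fin 2 →₀ ℕ => g v) hp
      simpa [E_apply_v u v h] using this
    · have := congrArg (fun g : Fin 2 →₀ ℕ => g u) hp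
      simpa [E_apply_u u v h] using this
  · rintro ⟨⟨n1, n2⟩, ⟨m1, m2⟩⟩ hx
    simp only [Finset.mem_product, Finset.HasAntidiagonal.mem_antidiagonal] at hx
    rw [Finset.HasAntidiagonal.mem_antidiagonal]
    rw [E_add, hx.1, hx.2]
  · rintro ⟨p1, p2⟩ _
    simp only [Prod.mk.injEq]
    exact ⟨decomp u v h p1, decomp u v h p2⟩
  · rintro ⟨⟨n1, n2⟩, ⟨m1, m2⟩⟩ _
    simp [E_apply_u u v h, E_apply_v u v h]
  · rintro ⟨p1, p2⟩ _
    simp only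
    rw [decomp u v h p1, decomp u v h p2]

/-- the splitting ring hom  `k[[x₀,x₁]] → k[[u]][[v]]`. -/
def splitHom (u v : Fin 2) (h : u ≠ v) : MvPowerSeries (Fin 2) k →+* PowerSeries (PowerSeries k) where
  toFun a := PowerSeries.mk fun n => PowerSeries.mk fun m => MvPowerSeries.coeff (R := k) (E u v n m) a
  map_zero' := by
    refine PowerSeries.ext fun n => PowerSeries.ext fun m => ?_
    simp
  map_one' := by
    refine PowerSeries.ext fun n => PowerSeries.ext fun m => ?_
    rw [PowerSeries.coeff_mk, PowerSeries.coeff_mk, MvPowerSeries.coeff_one]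
    by_cases hn : n = 0
    · subst hn
      rw [PowerSeries.coeff_one, if_pos rfl, PowerSeries.coeff_one]
      simp [E_eq_zero u v h]
    · rw [PowerSeries.coeff_one, if_neg hn, map_zero,
        if_neg (by simp [E_eq_zero u v h, hn])]
  map_add' a b := by
    refine PowerSeries.ext fun n => PowerSeries.ext fun m => ?_
    simp [PowerSeries.coeff_mk]
  map_mul' a b := by
    refine PowerSeries.ext fun n => PowerSeries.ext fun m => ?_
    rw [PowerSeries.coeff_mk, PowerSeries.coeff_mk, coeff_mul_E u v h]
    rw [PowerSeries.coeff_mul, map_sum]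
    refine Finset.sum_congr rfl fun p _ => ?_
    rw [PowerSeries.coeff_mul]
    refine Finset.sum_congr rfl fun q _ => ?_
    simp [PowerSeries.coeff_mk]

lemma coeff_split' (u v : Fin 2) (h : u ≠ v) (a : MvPowerSeries (Fin 2) k) (n m : ℕ) :
    PowerSeries.coeff (R := k) m (PowerSeries.coeff (R := PowerSeries k) n (splitHom u v h a)) =
      MvPowerSeries.coeff (R := k) (E u v n m) a := by
  simp [splitHom, PowerSeries.coeff_mk]

/-- `k[[x₀,x₁]] → k((t))[[τ]]`, sending `x_u ↦ t`, `x_v ↦ t⁻¹ τ`. -/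
def beta (u v : Fin 2) (h : u ≠ v) : MvPowerSeries (Fin 2) k →+* PowerSeries (LaurentSeries k) :=
  ((PowerSeries.rescale (HahnSeries.single (-1 : ℤ) (1 : k))).comp
    (PowerSeries.map (HahnSeries.ofPowerSeries ℤ k))).comp (splitHom u v h)

lemma coeff_beta (u v : Fin 2) (h : u ≠ v) (a : MvPowerSeries (Fin 2) k) (j : ℕ) (m : ℤ) :
    (PowerSeries.coeff (R := LaurentSeries k) j (beta u v h a)).coeff m =
      if 0 ≤ m + (j : ℤ) then MvPowerSeries.coeff (R := k) (E u v j (m + (j : ℤ)).toNat) a else 0 := by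
  rw [beta, RingHom.comp_apply, RingHom.comp_apply, PowerSeries.coeff_rescale,
    PowerSeries.coeff_map, HahnSeries.single_pow, one_pow]
  have harg : (m + (j : ℤ)) + (j : ℕ) • (-1 : ℤ) = m := by simp
  have hsm := HahnSeries.coeff_single_mul_add (r := (1 : k))
    (x := (HahnSeries.ofPowerSeries ℤ k) ((PowerSeries.coeff (R := PowerSeries k) j) (splitHom u v h a)))
    (a := m + (j : ℤ)) (b := (j : ℕ) • (-1 : ℤ))
  rw [harg, one_mul] at hsm
  rw [hsm]
  by_cases hmj : 0 ≤ m + (j : ℤ)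
  · rw [if_pos hmj]
    have hcast : m + (j : ℤ) = ((m + (j : ℤ)).toNat : ℤ) := (Int.toNat_of_nonneg hmj).symm
    rw [hcast, HahnSeries.ofPowerSeries_apply_coeff, coeff_split' u v h, Int.toNat_natCast]
  · rw [if_neg hmj]
    rw [HahnSeries.ofPowerSeries_apply]
    apply HahnSeries.embDomain_notin_range
    rintro ⟨p, hp⟩
    simp only [Nat.castOrderEmbedding_apply] at hp
    omega


lemma coeff_E_X_u (u v : Fin 2) (h : u ≠ v) (n m : ℕ) :
    MvPowerSeries.coeff (R := k) (E u v n m) (X u : MvPowerSeries (Fin 2) k)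
      = if n = 0 ∧ m = 1 then 1 else 0 := by
  rw [MvPowerSeries.coeff_X]
  by_cases hc : n = 0 ∧ m = 1
  · obtain ⟨rfl, rfl⟩ := hc
    rw [if_pos (by simp [E]), if_pos ⟨rfl, rfl⟩]
  · rw [if_neg ?_, if_neg hc]
    intro hE
    have h1 : Finsupp.single u 1 = E u v 0 1 := by simp [E]
    rw [h1, E_inj u v h] at hE
    exact hc hE

lemma coeff_E_X_v (u v : Fin 2) (h : u ≠ v) (n m : ℕ) :
    MvPowerSeries.coeff (R := k) (E u v n m) (X v : MvPowerSeries (Fin 2) k)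
      = if n = 1 ∧ m = 0 then 1 else 0 := by
  rw [MvPowerSeries.coeff_X]
  by_cases hc : n = 1 ∧ m = 0
  · obtain ⟨rfl, rfl⟩ := hc
    rw [if_pos (by simp [E]), if_pos ⟨rfl, rfl⟩]
  · rw [if_neg ?_, if_neg hc]
    intro hE
    have h1 : Finsupp.single v 1 = E u v 1 0 := by simp [E]
    rw [h1, E_inj u v h] at hE
    exact hc hE

end Stmt0Aux

theorem stmt0 (k : Type*) [CommRing k] :
    ∃ α : MvPowerSeries (Fin 2) k →+*
        PowerSeries (LaurentSeries k) × PowerSeries (LaurentSeries k),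
      Function.Injective α ∧
      -- first component: Σ_{j≥0} ( Σ_{i≥0} a_{ij} t^{i−j} ) τ^j
      (∀ (a : MvPowerSeries (Fin 2) k) (j : ℕ) (m : ℤ),
        (PowerSeries.coeff (R := LaurentSeries k) j ((α a).1)).coeff m =
          if 0 ≤ m + (j : ℤ) then
            MvPowerSeries.coeff (R := k)
              (Finsupp.single (0 : Fin 2) (m + (j : ℤ)).toNat + Finsupp.single (1 : Fin 2) j) a
          else 0) ∧
      -- second component: Σ_{i≥0} ( Σ_{j≥0} a_{ij} s^{j−i} ) τ^i
      (∀ (a : MvPowerSeries (Fin 2) k) (i : ℕ) (m : ℤ),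
        (PowerSeries.coeff (R := LaurentSeries k) i ((α a).2)).coeff m =
          if 0 ≤ m + (i : ℤ) then
            MvPowerSeries.coeff (R := k)
              (Finsupp.single (0 : Fin 2) i + Finsupp.single (1 : Fin 2) (m + (i : ℤ)).toNat) a
          else 0) ∧
      -- α(u) = (t, s⁻¹τ)
      α (MvPowerSeries.X 0) =
        (PowerSeries.C (R := LaurentSeries k) (HahnSeries.single (1 : ℤ) (1 : k)),
         PowerSeries.monomial (R := LaurentSeries k) 1 (HahnSeries.single (-1 : ℤ) (1 : k))) ∧
      -- α(v) = (t⁻¹τ, s)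
      α (MvPowerSeries.X 1) =
        (PowerSeries.monomial (R := LaurentSeries k) 1 (HahnSeries.single (-1 : ℤ) (1 : k)),
         PowerSeries.C (R := LaurentSeries k) (HahnSeries.single (1 : ℤ) (1 : k))) ∧
      -- α(u·v) = (τ, τ)
      α (MvPowerSeries.X 0 * MvPowerSeries.X 1) =
        (PowerSeries.monomial (R := LaurentSeries k) 1 (1 : LaurentSeries k),
         PowerSeries.monomial (R := LaurentSeries k) 1 (1 : LaurentSeries k)) := by
  have h01 : (0 : Fin 2) ≠ 1 := by decide
  have h10 : (1 : Fin 2) ≠ 0 := by decide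
  have hXu : ((beta 0 1 h01).prod (beta 1 0 h10)) (MvPowerSeries.X 0) =
      (PowerSeries.C (R := LaurentSeries k) (HahnSeries.single (1 : ℤ) (1 : k)),
       PowerSeries.monomial (R := LaurentSeries k) 1 (HahnSeries.single (-1 : ℤ) (1 : k))) := by
      rw [RingHom.prod_apply]
      refine Prod.ext ?_ ?_ <;> simp only <;>
        refine PowerSeries.ext fun j => HahnSeries.ext (funext fun m => ?_)
      · rw [coeff_beta 0 1 h01, coeff_E_X_u 0 1 h01, PowerSeries.coeff_C]
        by_cases hj : j = 0
        · subst hj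
          rw [if_pos rfl, HahnSeries.coeff_single]
          split_ifs <;> first | rfl | omega
        · rw [if_neg hj, HahnSeries.coeff_zero]
          split_ifs <;> first | rfl | omega
      · rw [coeff_beta 1 0 h10, coeff_E_X_v 1 0 h10, PowerSeries.coeff_monomial]
        by_cases hj : j = 1
        · subst hj
          rw [if_pos rfl, HahnSeries.coeff_single]
          split_ifs <;> first | rfl | omega
        · rw [if_neg hj, HahnSeries.coeff_zero]
          split_ifs <;> first | rfl | omega
  have hXv : ((beta 0 1 h01).prod (beta 1 0 h10)) (MvPowerSeries.X 1) =
      (PowerSeries.monomial (R := LaurentSeries k) 1 (HahnSeries.single (-1 : ℤ) (1 : k)),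
       PowerSeries.C (R := LaurentSeries k) (HahnSeries.single (1 : ℤ) (1 : k))) := by
      rw [RingHom.prod_apply]
      refine Prod.ext ?_ ?_ <;> simp only <;>
        refine PowerSeries.ext fun j => HahnSeries.ext (funext fun m => ?_)
      · rw [coeff_beta 0 1 h01, coeff_E_X_v 0 1 h01, PowerSeries.coeff_monomial]
        by_cases hj : j = 1
        · subst hj
          rw [if_pos rfl, HahnSeries.coeff_single]
          split_ifs <;> first | rfl | omega
        · rw [if_neg hj, HahnSeries.coeff_zero]
          split_ifs <;> first | rfl | omega
      · rw [coeff_beta 1 0 h10, coeff_E_X_u 1 0 h10, PowerSeries.coeff_C]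
        by_cases hj : j = 0
        · subst hj
          rw [if_pos rfl, HahnSeries.coeff_single]
          split_ifs <;> first | rfl | omega
        · rw [if_neg hj, HahnSeries.coeff_zero]
          split_ifs <;> first | rfl | omega
  refine ⟨(beta 0 1 h01).prod (beta 1 0 h10), ?_, ?_, ?_, hXu, hXv, ?_⟩
  · -- injectivity
    intro a b hab
    have h1 : beta 0 1 h01 a = beta 0 1 h01 b := congrArg Prod.fst hab
    apply MvPowerSeries.ext
    intro s
    have hc : (PowerSeries.coeff (R := LaurentSeries k) (s 1) (beta 0 1 h01 a)).coeff
          ((s 0 : ℤ) - (s 1 : ℤ))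
        = (PowerSeries.coeff (R := LaurentSeries k) (s 1) (beta 0 1 h01 b)).coeff
          ((s 0 : ℤ) - (s 1 : ℤ)) := by rw [h1]
    rw [coeff_beta, coeff_beta] at hc
    have hge : (0:ℤ) ≤ (s 0 : ℤ) - (s 1 : ℤ) + (s 1 : ℤ) := by omega
    rw [if_pos hge, if_pos hge] at hc
    have htn : ((s 0 : ℤ) - (s 1 : ℤ) + (s 1 : ℤ)).toNat = s 0 := by omega
    rw [htn] at hc
    rwa [decomp 0 1 h01 s] at hc
  · -- first coefficient property
    intro a j m
    rw [RingHom.prod_apply]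
    exact coeff_beta 0 1 h01 a j m
  · -- second coefficient property
    intro a i m
    rw [RingHom.prod_apply]
    rw [coeff_beta 1 0 h10 a i m]
    congr 1
    rw [show E 1 0 i (m + (i:ℤ)).toNat =
      Finsupp.single (0 : Fin 2) i + Finsupp.single (1 : Fin 2) (m + (i : ℤ)).toNat from add_comm _ _]
  · -- α(uv)
    rw [map_mul, hXu, hXv, Prod.mk_mul_mk]
    have hmul : HahnSeries.single (1 : ℤ) (1 : k) * HahnSeries.single (-1 : ℤ) (1 : k) = 1 := by
      rw [HahnSeries.single_mul_single, one_mul]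
      norm_num [HahnSeries.single_zero_one]
    have hc1 : PowerSeries.C (R := LaurentSeries k) (HahnSeries.single (1 : ℤ) (1 : k)) *
        PowerSeries.monomial (R := LaurentSeries k) 1 (HahnSeries.single (-1 : ℤ) (1 : k)) =
        PowerSeries.monomial (R := LaurentSeries k) 1 (1 : LaurentSeries k) := by
      refine PowerSeries.ext fun n => ?_
      rw [PowerSeries.coeff_C_mul, PowerSeries.coeff_monomial, PowerSeries.coeff_monomial]
      split_ifs
      · rw [hmul]
      · rw [mul_zero]
    refine Prod.ext ?_ ?_ <;> simp only
    · exact hc1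
    · rw [mul_comm]; exact hc1
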